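/- For a real-valued random variable X with mid distribution function F̄ defined by F̄(x) = P(X < x) + (1/2) P(X = x), the expectation of the grade satisfies E[F̄(X)] = 1/2. -/
import Mathlib


open MeasureTheory ProbabilityTheory

noncomputable section

variable {Ω : Type*} [MeasurableSpace Ω]

/-- Mid distribution function of `X` under `μ`: `F̄(x) = P(X < x) + (1/2) P(X = x)`. -/
def mdf (μ : Measure Ω) (X : Ω → ℝ) (x : ℝ) : ℝ :=
  (μ {ω | X ω < x}).toReal + (1 / 2) * (μ {ω | X ω = x}).toReal

/-- Covariance of two real random variables under `μ`. -/
def covar (μ : Measure Ω) (f g : Ω → ℝ) : ℝ :=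
  (∫ ω, f ω * g ω ∂μ) - (∫ ω, f ω ∂μ) * (∫ ω, g ω ∂μ)

/-- Similarity function `s(a,b) = 1{a < b} + (1/2) 1{a = b}`. -/
def simFun (a b : ℝ) : ℝ :=
  (if a < b then 1 else 0) + (1 / 2) * (if a = b then 1 else 0)

/-- Granularity `γ(X) = P(X = X' = X'')` for i.i.d. copies of `X`. -/
def gran (μ : Measure Ω) (X : Ω → ℝ) : ℝ :=
  ((μ.prod (μ.prod μ)) {ω | X ω.1 = X ω.2.1 ∧ X ω.2.1 = X ω.2.2}).toReal

/-- Asymmetric grade correlation `AGC(U,V) = Cov(F̄_U(U), Ḡ_V(V)) / Var(Ḡ_V(V))`. -/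
def agc (μ : Measure Ω) (U V : Ω → ℝ) : ℝ :=
  covar μ (fun ω => mdf μ U (U ω)) (fun ω => mdf μ V (V ω)) /
    covar μ (fun ω => mdf μ V (V ω)) (fun ω => mdf μ V (V ω))

/-- Coefficient of monotone association `CMA(U,V) = (AGC(U,V) + 1) / 2`. -/
def cma (μ : Measure Ω) (U V : Ω → ℝ) : ℝ := (agc μ U V + 1) / 2

/-- `X` is not almost surely constant. -/
def Nondeg (μ : Measure Ω) (X : Ω → ℝ) : Prop := ¬ ∃ c : ℝ, X =ᵐ[μ] fun _ => c

/-- Pearson correlation. -/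
def pcor (μ : Measure Ω) (f g : Ω → ℝ) : ℝ :=
  covar μ f g / (Real.sqrt (covar μ f f) * Real.sqrt (covar μ g g))

/-- Quantile function (generalized inverse of the CDF). -/
def qf (μ : Measure Ω) (Y : Ω → ℝ) (α : ℝ) : ℝ :=
  sInf {y : ℝ | α ≤ (μ {ω | Y ω ≤ y}).toReal}

/-- `E[F̄(X)] = 1/2`. -/
theorem stmt_0 (μ : Measure Ω) [IsProbabilityMeasure μ] (X : Ω → ℝ) (hX : Measurable X) :
    (∫ ω, mdf μ X (X ω) ∂μ) = 1 / 2 := by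
  classical
  -- sets in the product space
  set sLt : Set (Ω × Ω) := {p | X p.2 < X p.1} with hsLt
  set sEq : Set (Ω × Ω) := {p | X p.2 = X p.1} with hsEq
  set sGt : Set (Ω × Ω) := {p | X p.1 < X p.2} with hsGt
  have hmLt : MeasurableSet sLt :=
    measurableSet_lt (hX.comp measurable_snd) (hX.comp measurable_fst)
  have hmEq : MeasurableSet sEq :=
    measurableSet_eq_fun (hX.comp measurable_snd) (hX.comp measurable_fst)
  have hmGt : MeasurableSet sGt :=
    measurableSet_lt (hX.comp measurable_fst) (hX.comp measurable_snd)
  set P : Measure (Ω × Ω) := μ.prod μ with hP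
  haveI : IsProbabilityMeasure P := by rw [hP]; infer_instance
  -- symmetry: P sLt = P sGt
  have hswap : P sGt = P sLt := by
    have h1 : (P.map Prod.swap) sLt = P (Prod.swap ⁻¹' sLt) :=
      Measure.map_apply measurable_swap hmLt
    have h2 : P.map Prod.swap = P := by rw [hP, Measure.prod_swap]
    have h3 : Prod.swap ⁻¹' sLt = sGt := rfl
    rw [h2, h3] at h1
    exact h1.symm
  -- P sLt + P sEq + P sGt = 1
  have hdisj1 : Disjoint sLt sEq := by
    rw [Set.disjoint_left]; intro p h1 h2; exact absurd h2 (ne_of_lt h1)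
  have hdisj2 : Disjoint (sLt ∪ sEq) sGt := by
    rw [Set.disjoint_left]; intro p h1 h2
    rcases h1 with h1 | h1
    · exact lt_irrefl (X p.2) (h1.trans h2)
    · exact absurd h1 (ne_of_gt h2)
  have huniv : sLt ∪ sEq ∪ sGt = Set.univ := by
    ext p; simp only [Set.mem_union, Set.mem_univ, iff_true, hsLt, hsEq, hsGt,
      Set.mem_setOf_eq]
    rcases lt_trichotomy (X p.2) (X p.1) with h | h | h
    · exact Or.inl (Or.inl h)
    · exact Or.inl (Or.inr h)
    · exact Or.inr h
  have hsum : P sLt + P sEq + P sGt = 1 := by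
    rw [← measure_union hdisj1 hmEq, ← measure_union hdisj2 hmGt, huniv,
      measure_univ]
  -- identify the two integrals as measures of product sets
  have hfin : ∀ s : Set (Ω × Ω), P s ≠ ⊤ := fun s => (measure_lt_top P s).ne
  have hsecLt : ∀ ω, Prod.mk ω ⁻¹' sLt = {ω' | X ω' < X ω} := fun ω => rfl
  have hsecEq : ∀ ω, Prod.mk ω ⁻¹' sEq = {ω' | X ω' = X ω} := fun ω => rfl
  have key : ∀ s : Set (Ω × Ω), MeasurableSet s →
      (∫ ω, (μ (Prod.mk ω ⁻¹' s)).toReal ∂μ) = (P s).toReal := by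
    intro s hs
    have hmeas : Measurable fun ω => μ (Prod.mk ω ⁻¹' s) :=
      measurable_measure_prodMk_left hs
    have hlint : ∫⁻ ω, μ (Prod.mk ω ⁻¹' s) ∂μ = P s := (Measure.prod_apply hs).symm
    rw [← hlint]
    exact integral_toReal hmeas.aemeasurable
      (Filter.Eventually.of_forall fun ω => measure_lt_top μ _)
  have hLt : (∫ ω, (μ {ω' | X ω' < X ω}).toReal ∂μ) = (P sLt).toReal := by
    rw [← key sLt hmLt]; rfl
  have hEq : (∫ ω, (μ {ω' | X ω' = X ω}).toReal ∂μ) = (P sEq).toReal := by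
    rw [← key sEq hmEq]; rfl
  -- integrability for splitting the integral
  have hint : ∀ s : Set (Ω × Ω), MeasurableSet s →
      Integrable (fun ω => (μ (Prod.mk ω ⁻¹' s)).toReal) μ := by
    intro s hs
    refine integrable_toReal_of_lintegral_ne_top
      (measurable_measure_prodMk_left hs).aemeasurable ?_
    rw [← Measure.prod_apply hs]
    exact hfin s
  have hintLt : Integrable (fun ω => (μ {ω' | X ω' < X ω}).toReal) μ := hint sLt hmLt
  have hintEq : Integrable (fun ω => (μ {ω' | X ω' = X ω}).toReal) μ := hint sEq hmEq
  -- put it together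
  have hsplit : (∫ ω, mdf μ X (X ω) ∂μ)
      = (∫ ω, (μ {ω' | X ω' < X ω}).toReal ∂μ)
        + (1 / 2) * (∫ ω, (μ {ω' | X ω' = X ω}).toReal ∂μ) := by
    simp only [mdf]
    rw [integral_add hintLt (hintEq.const_mul _), integral_const_mul]
  rw [hsplit, hLt, hEq]
  -- arithmetic
  have h2 : 2 * (P sLt).toReal + (P sEq).toReal = 1 := by
    have : (P sLt + P sEq + P sGt).toReal = 1 := by rw [hsum]; simp
    rw [ENNReal.toReal_add (ENNReal.add_ne_top.2 ⟨hfin _, hfin _⟩) (hfin _),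
      ENNReal.toReal_add (hfin _) (hfin _), hswap] at this
    linarith
  linarith

end
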